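/- The concordance number of a closed polygonal curve C is independent of the choice of the auxiliary oriented line l, provided l is not collinear with any segment of C: for any two such lines l, l', Σ c_l(e',e'') = Σ c_{l'}(e',e'') (mod 2), the sums being over consecutive segment pairs of C. -/

import Mathlib

/-- `l` lies in the interior of the cone spanned by `u` and `w` (nonempty interior
requires `u, w` linearly independent). -/
def inConeInt (u w l : ℝ × ℝ) : Prop :=
  LinearIndependent ℝ ![u, w] ∧ ∃ a b : ℝ, 0 < a ∧ 0 < b ∧ l = a • u + b • w

/-- The oriented segment of the closed polygonal curve with vertices `v` starting at
`v i`. -/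
def seg {m : ℕ} [NeZero m] (v : Fin m → ℝ × ℝ) (i : Fin m) : ℝ × ℝ := v (i + 1) - v i

open Classical in
/-- `c_l(C)` as an element of `ℤ/2ℤ`: the mod-2 number of consecutive-segment pairs of
the closed polygonal curve `v` whose spanned cone contains the direction of `l`. -/
noncomputable def concordanceAt {m : ℕ} [NeZero m] (v : Fin m → ℝ × ℝ)
    (l : ℝ × ℝ) : ZMod 2 :=
  ∑ i : Fin m, if inConeInt (seg v i) (seg v (i + 1)) l then 1 else 0

/-! ### Auxiliary determinant machinery -/

noncomputable def det2 (p q : ℝ × ℝ) : ℝ := p.1 * q.2 - p.2 * q.1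

lemma det2_skew (p q : ℝ × ℝ) : det2 p q = -det2 q p := by simp [det2]; ring

lemma det2_smul_right (p q : ℝ × ℝ) (t : ℝ) : det2 p (t • q) = t * det2 p q := by
  simp [det2]; ring

lemma det2_smul_left (p q : ℝ × ℝ) (t : ℝ) : det2 (t • p) q = t * det2 p q := by
  simp [det2]; ring

lemma det2_add_right (p q r : ℝ × ℝ) : det2 p (q + r) = det2 p q + det2 p r := by
  simp [det2]; ring

lemma cramer (u w l : ℝ × ℝ) : det2 u w • l = det2 l w • u + det2 u l • w := by
  have h1 : (det2 u w • l).1 = (det2 l w • u + det2 u l • w).1 := by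
    simp [det2]; ring
  have h2 : (det2 u w • l).2 = (det2 l w • u + det2 u l • w).2 := by
    simp [det2]; ring
  exact Prod.ext h1 h2

lemma exists_smul_of_det2_eq_zero {u w : ℝ × ℝ} (h : det2 u w = 0) (hu : u ≠ 0) :
    ∃ c : ℝ, w = c • u := by
  unfold det2 at h
  rcases eq_or_ne u.1 0 with h1 | h1
  · have h2 : u.2 ≠ 0 := fun h2 => hu (Prod.ext h1 h2)
    refine ⟨w.2 / u.2, Prod.ext ?_ ?_⟩
    · show w.1 = w.2 / u.2 * u.1
      field_simp
      nlinarith [h]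
    · show w.2 = w.2 / u.2 * u.2
      field_simp
  · refine ⟨w.1 / u.1, Prod.ext ?_ ?_⟩
    · show w.1 = w.1 / u.1 * u.1
      field_simp
    · show w.2 = w.1 / u.1 * u.2
      field_simp
      nlinarith [h]

lemma li_of_det2_ne_zero {u w : ℝ × ℝ} (h : det2 u w ≠ 0) :
    LinearIndependent ℝ ![u, w] := by
  rw [LinearIndependent.pair_iff]
  intro s t hst
  have h1 : s * u.1 + t * w.1 = 0 := congrArg Prod.fst hst
  have h2 : s * u.2 + t * w.2 = 0 := congrArg Prod.snd hst
  constructor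
  · have hs : s * det2 u w = 0 := by unfold det2; linear_combination w.2 * h1 - w.1 * h2
    exact (mul_eq_zero.1 hs).resolve_right h
  · have ht : t * det2 u w = 0 := by unfold det2; linear_combination u.1 * h2 - u.2 * h1
    exact (mul_eq_zero.1 ht).resolve_right h

lemma det2_ne_zero_of_li {u w : ℝ × ℝ} (h : LinearIndependent ℝ ![u, w]) :
    det2 u w ≠ 0 := by
  intro hd
  have hu : u ≠ 0 := by
    have := h.ne_zero 0
    simpa using this
  obtain ⟨c, hc⟩ := exists_smul_of_det2_eq_zero hd hu
  rw [LinearIndependent.pair_iff] at h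
  have := (h c (-1) (by rw [hc]; module)).2
  norm_num at this

lemma inConeInt_iff (u w l : ℝ × ℝ) :
    inConeInt u w l ↔
      det2 u w ≠ 0 ∧ 0 < det2 u l * det2 u w ∧ 0 < det2 l w * det2 u w := by
  constructor
  · rintro ⟨hli, a, b, ha, hb, rfl⟩
    have hA := det2_ne_zero_of_li hli
    refine ⟨hA, ?_, ?_⟩
    · have : det2 u (a • u + b • w) = b * det2 u w := by
        rw [det2_add_right, det2_smul_right, det2_smul_right]
        have : det2 u u = 0 := by simp [det2]; ring
        rw [this]; ring
      rw [this]
      have := mul_pos hb (mul_self_pos.2 hA)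
      nlinarith
    · have : det2 (a • u + b • w) w = a * det2 u w := by
        have h1 : det2 (a • u + b • w) w = -det2 w (a • u + b • w) := by simp [det2]; ring
        rw [h1, det2_add_right, det2_smul_right, det2_smul_right]
        have hww : det2 w w = 0 := by simp [det2]; ring
        have huw : det2 w u = -det2 u w := by simp [det2]; ring
        rw [hww, huw]; ring
      rw [this]
      nlinarith [mul_self_pos.2 hA]
  · rintro ⟨hA, h1, h2⟩
    refine ⟨li_of_det2_ne_zero hA, det2 l w / det2 u w, det2 u l / det2 u w, ?_, ?_, ?_⟩
    · exact div_pos_iff.2 (by rcases mul_pos_iff.1 h2 with ⟨p,q⟩|⟨p,q⟩ <;> [left; right] <;> exact ⟨p,q⟩)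
    · exact div_pos_iff.2 (by rcases mul_pos_iff.1 h1 with ⟨p,q⟩|⟨p,q⟩ <;> [left; right] <;> exact ⟨p,q⟩)
    · apply smul_right_injective (ℝ × ℝ) hA
      show det2 u w • l = det2 u w • ((det2 l w / det2 u w) • u + (det2 u l / det2 u w) • w)
      rw [smul_add, smul_smul, smul_smul, mul_div_cancel₀ _ hA, mul_div_cancel₀ _ hA]
      exact cramer u w l

lemma inConeInt_smul_pos (u w l : ℝ × ℝ) {t : ℝ} (ht : 0 < t) :
    inConeInt u w (t • l) ↔ inConeInt u w l := by
  rw [inConeInt_iff, inConeInt_iff, det2_smul_right, det2_smul_left]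
  constructor
  · rintro ⟨hA, h1, h2⟩
    exact ⟨hA, by nlinarith, by nlinarith⟩
  · rintro ⟨hA, h1, h2⟩
    exact ⟨hA, by nlinarith, by nlinarith⟩

/-! ### Core sign lemmas -/

set_option maxHeartbeats 2000000 in
open Classical in
lemma core (A B P Q R S : ℝ) (hA : A ≠ 0) (hB : B ≠ 0) (hP : P ≠ 0) (hQ : Q ≠ 0)
    (hR : R ≠ 0) (hS : S ≠ 0) (hpl : A * B = P * S - Q * R) :
    (if 0 < P * A ∧ 0 < -R * A then (1 : ZMod 2) else 0) +
      (if 0 < Q * A ∧ 0 < -S * A then 1 else 0) =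
    (if 0 < -P * B ∧ 0 < Q * B then 1 else 0) +
      (if 0 < -R * B ∧ 0 < S * B then 1 else 0) := by
  simp only [mul_pos_iff, neg_pos, neg_lt_zero]
  rcases hA.lt_or_gt with hA' | hA' <;>
  rcases hB.lt_or_gt with hB' | hB' <;>
  rcases hP.lt_or_gt with hP' | hP' <;>
  rcases hQ.lt_or_gt with hQ' | hQ' <;>
  rcases hR.lt_or_gt with hR' | hR' <;>
  rcases hS.lt_or_gt with hS' | hS' <;>
  first
  | (exfalso; nlinarith)
  | (simp [hA', hB', hP', hQ', hR', hS', asymm hA', asymm hB', asymm hP', asymm hQ',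
      asymm hR', asymm hS'] <;> decide)

set_option maxHeartbeats 2000000 in
open Classical in
lemma coreNeg (A P R t : ℝ) (hA : A ≠ 0) (hP : P ≠ 0) (hR : R ≠ 0) (ht : t < 0) :
    (if 0 < P * A ∧ 0 < -R * A then (1 : ZMod 2) else 0) +
      (if 0 < t * P * A ∧ 0 < t * -R * A then 1 else 0) =
    (if 0 < P then 1 else 0) + (if 0 < R then 1 else 0) := by
  simp only [mul_pos_iff, mul_neg_iff, neg_pos, neg_lt_zero]
  rcases hA.lt_or_gt with hA' | hA' <;>
  rcases hP.lt_or_gt with hP' | hP' <;>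
  rcases hR.lt_or_gt with hR' | hR' <;>
  simp [ht, asymm ht, hA', hP', hR', asymm hA', asymm hP', asymm hR'] <;> decide

/-! ### Per-index lemmas -/

open Classical in
lemma perI (u w l l' : ℝ × ℝ) (hcone : ¬∃ t : ℝ, t < 0 ∧ w = t • u)
    (hB : det2 l l' ≠ 0) (hP : det2 u l ≠ 0) (hQ : det2 u l' ≠ 0)
    (hR : det2 w l ≠ 0) (hS : det2 w l' ≠ 0) :
    (if inConeInt u w l then (1 : ZMod 2) else 0) +
      (if inConeInt u w l' then 1 else 0) =
    (if 0 < -det2 u l * det2 l l' ∧ 0 < det2 u l' * det2 l l' then 1 else 0) +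
      (if 0 < -det2 w l * det2 l l' ∧ 0 < det2 w l' * det2 l l' then 1 else 0) := by
  by_cases hA : det2 u w = 0
  · have hu : u ≠ 0 := fun h => hP (by rw [h]; simp [det2])
    obtain ⟨c, hc⟩ := exists_smul_of_det2_eq_zero hA hu
    have hc0 : c ≠ 0 := fun h0 => hR (by rw [hc, h0]; simp [det2])
    have hcpos : 0 < c := hc0.lt_or_gt.resolve_left (fun h => hcone ⟨c, h, hc⟩)
    have hn1 : ¬ inConeInt u w l := by
      rw [inConeInt_iff]; rintro ⟨h, -⟩; exact h hA
    have hn2 : ¬ inConeInt u w l' := by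
      rw [inConeInt_iff]; rintro ⟨h, -⟩; exact h hA
    rw [if_neg hn1, if_neg hn2]
    have e1 : det2 w l = c * det2 u l := by rw [hc, det2_smul_left]
    have e2 : det2 w l' = c * det2 u l' := by rw [hc, det2_smul_left]
    by_cases hg : 0 < -det2 u l * det2 l l' ∧ 0 < det2 u l' * det2 l l'
    · rw [if_pos hg, if_pos (by rw [e1, e2]; obtain ⟨g1, g2⟩ := hg; constructor <;> nlinarith)]
      decide
    · rw [if_neg hg, if_neg (by rw [e1, e2]; rintro ⟨g1, g2⟩; exact hg ⟨by nlinarith, by nlinarith⟩)]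
  · rw [inConeInt_iff, inConeInt_iff]
    simp only [ne_eq, hA, not_false_eq_true, true_and]
    have k1 : det2 l w = -det2 w l := det2_skew l w
    have k2 : det2 l' w = -det2 w l' := det2_skew l' w
    have k3 : det2 l u = -det2 u l := det2_skew l u
    rw [k1, k2]
    exact core (det2 u w) (det2 l l') (det2 u l) (det2 u l') (det2 w l) (det2 w l')
      hA hB hP hQ hR hS (by unfold det2; ring)

open Classical in
lemma perNeg (u w l : ℝ × ℝ) {t : ℝ} (ht : t < 0) (hcone : ¬∃ s : ℝ, s < 0 ∧ w = s • u)
    (hP : det2 u l ≠ 0) (hR : det2 w l ≠ 0) :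
    (if inConeInt u w l then (1 : ZMod 2) else 0) +
      (if inConeInt u w (t • l) then 1 else 0) =
    (if 0 < det2 u l then 1 else 0) + (if 0 < det2 w l then 1 else 0) := by
  by_cases hA : det2 u w = 0
  · have hu : u ≠ 0 := fun h => hP (by rw [h]; simp [det2])
    obtain ⟨c, hc⟩ := exists_smul_of_det2_eq_zero hA hu
    have hc0 : c ≠ 0 := fun h0 => hR (by rw [hc, h0]; simp [det2])
    have hcpos : 0 < c := hc0.lt_or_gt.resolve_left (fun h => hcone ⟨c, h, hc⟩)
    have hn1 : ¬ inConeInt u w l := by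
      rw [inConeInt_iff]; rintro ⟨h, -⟩; exact h hA
    have hn2 : ¬ inConeInt u w (t • l) := by
      rw [inConeInt_iff]; rintro ⟨h, -⟩; exact h hA
    rw [if_neg hn1, if_neg hn2]
    have e1 : det2 w l = c * det2 u l := by rw [hc, det2_smul_left]
    by_cases hg : 0 < det2 u l
    · rw [if_pos hg, if_pos (by rw [e1]; nlinarith)]
      decide
    · rw [if_neg hg, if_neg (by rw [e1]; intro h; exact hg (by nlinarith))]
  · rw [inConeInt_iff, inConeInt_iff]
    simp only [ne_eq, hA, not_false_eq_true, true_and]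
    have k1 : det2 l w = -det2 w l := det2_skew l w
    have k2 : det2 u (t • l) = t * det2 u l := det2_smul_right u l t
    have k3 : det2 (t • l) w = t * -det2 w l := by rw [det2_smul_left, k1]
    rw [k1, k2, k3]
    exact coreNeg (det2 u w) (det2 u l) (det2 w l) t hA hP hR ht

/-! ### Main theorem -/

/-- The concordance number of a closed polygonal curve is independent of the auxiliary
oriented line: if no two consecutive segments span a full line (i.e. no segment is a
negative multiple of its predecessor) and the lines `l`, `l'` are not collinear with any
segment of the curve, then `c_l(C) = c_{l'}(C)` (mod 2). -/
theorem concordance_independent_of_line (m : ℕ) [NeZero m] (v : Fin m → ℝ × ℝ)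
    (hcone : ∀ i : Fin m, ¬ ∃ t : ℝ, t < 0 ∧ seg v (i + 1) = t • seg v i)
    (l l' : ℝ × ℝ)
    (hl : ∀ i : Fin m, LinearIndependent ℝ ![seg v i, l])
    (hl' : ∀ i : Fin m, LinearIndependent ℝ ![seg v i, l']) :
    concordanceAt v l = concordanceAt v l' := by
  classical
  have hPl : ∀ i, det2 (seg v i) l ≠ 0 := fun i => det2_ne_zero_of_li (hl i)
  have hPl' : ∀ i, det2 (seg v i) l' ≠ 0 := fun i => det2_ne_zero_of_li (hl' i)
  have add_self : ∀ x : ZMod 2, x + x = 0 := by decide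
  have cancel : ∀ g : Fin m → ZMod 2, ∑ i : Fin m, (g i + g (i + 1)) = 0 := by
    intro g
    rw [Finset.sum_add_distrib]
    have h1 : ∑ i : Fin m, g (i + 1) = ∑ i : Fin m, g i :=
      Fintype.sum_equiv (Equiv.addRight 1) _ _ (fun i => rfl)
    rw [h1]
    exact add_self _
  have h2 : ∀ a b : ZMod 2, a + b = 0 → a = b := by decide
  by_cases hB : det2 l l' = 0
  · -- l and l' are collinear
    have hl0 : l ≠ 0 := by
      have := (hl 0).ne_zero 1; simpa using this
    have hl'0 : l' ≠ 0 := by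
      have := (hl' 0).ne_zero 1; simpa using this
    obtain ⟨t, ht⟩ := exists_smul_of_det2_eq_zero hB hl0
    have ht0 : t ≠ 0 := by
      rintro rfl
      rw [zero_smul] at ht
      exact hl'0 ht
    rcases ht0.lt_or_gt with htneg | htpos
    · -- t < 0
      apply h2
      rw [concordanceAt, concordanceAt, ← Finset.sum_add_distrib, ht]
      have step : ∀ i : Fin m,
          ((if inConeInt (seg v i) (seg v (i + 1)) l then (1 : ZMod 2) else 0) +
            (if inConeInt (seg v i) (seg v (i + 1)) (t • l) then 1 else 0)) =
          ((if 0 < det2 (seg v i) l then (1 : ZMod 2) else 0) +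
            (if 0 < det2 (seg v (i + 1)) l then 1 else 0)) := fun i =>
        perNeg (seg v i) (seg v (i + 1)) l htneg (hcone i) (hPl i) (hPl (i + 1))
      rw [Finset.sum_congr rfl (fun i _ => step i)]
      exact cancel (fun i => if 0 < det2 (seg v i) l then 1 else 0)
    · -- t > 0
      have heq : concordanceAt v l' = concordanceAt v l := by
        rw [ht, concordanceAt, concordanceAt]
        exact Finset.sum_congr rfl fun i _ =>
          if_congr (inConeInt_smul_pos _ _ _ htpos) rfl rfl
      rw [heq]
  · -- l and l' independent
    apply h2
    rw [concordanceAt, concordanceAt, ← Finset.sum_add_distrib]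
    have step : ∀ i : Fin m,
        ((if inConeInt (seg v i) (seg v (i + 1)) l then (1 : ZMod 2) else 0) +
          (if inConeInt (seg v i) (seg v (i + 1)) l' then 1 else 0)) =
        ((if 0 < -det2 (seg v i) l * det2 l l' ∧ 0 < det2 (seg v i) l' * det2 l l'
            then (1 : ZMod 2) else 0) +
          (if 0 < -det2 (seg v (i + 1)) l * det2 l l' ∧
              0 < det2 (seg v (i + 1)) l' * det2 l l' then 1 else 0)) := fun i =>
      perI (seg v i) (seg v (i + 1)) l l' (hcone i) hB (hPl i) (hPl' i)
        (hPl (i + 1)) (hPl' (i + 1))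
    rw [Finset.sum_congr rfl (fun i _ => step i)]
    exact cancel (fun i =>
      if 0 < -det2 (seg v i) l * det2 l l' ∧ 0 < det2 (seg v i) l' * det2 l l'
        then 1 else 0)
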